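/- arXiv:1408.4421 — 2 statements merged into one kernel-verified Lean document; each statement's English description precedes it below -/
import Mathlib

section
/- Let c ≥ 0 be a real constant. If a univariate real polynomial f has all real roots, then (1 − cD)f = f − c·f′ also has all real roots. -/
open Polynomial

/-- Logarithmic derivative of a product of linear factors at a non-root. -/
lemma logderiv_prod (s : Multiset ℂ) (z : ℂ) (hz : ∀ r ∈ s, z - r ≠ 0) :
    eval z (derivative ((s.map fun r => X - C r).prod)) =
      eval z ((s.map fun r => X - C r).prod) * (s.map fun r => (z - r)⁻¹).sum := by
  induction s using Multiset.induction with
  | empty => simp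
  | cons a t ih =>
      have ha : z - a ≠ 0 := hz a (Multiset.mem_cons_self a t)
      have ht : ∀ r ∈ t, z - r ≠ 0 := fun r hr => hz r (Multiset.mem_cons_of_mem hr)
      simp only [Multiset.map_cons, Multiset.prod_cons, derivative_mul, derivative_sub,
        derivative_X, derivative_C, sub_zero, one_mul, eval_add, eval_mul, eval_sub, eval_X,
        eval_C, Multiset.sum_cons, ih ht]
      field_simp

/-- A real polynomial is real-rooted if it splits over `ℝ`
(equivalently, all of its complex roots are real). -/
def RealRooted (p : Polynomial ℝ) : Prop := (p.map (RingHom.id ℝ)).Splits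

/-- **`(1 - cD)` preserves real-rootedness.**
For `c ≥ 0`, if the real polynomial `f` has all real roots, then so does
`(1 - cD) f = f - c f'`. -/
theorem oneSubCD_preserves_real_rooted (c : ℝ) (hc : 0 ≤ c)
    (f : Polynomial ℝ) (hf : RealRooted f) :
    RealRooted (f - c • Polynomial.derivative f) := by
  rcases eq_or_lt_of_le hc with hc0 | hc0
  · subst hc0; simpa using hf
  rcases eq_or_ne f 0 with rfl | hf0
  · simp [RealRooted, Splits.zero]
  set g := f - c • Polynomial.derivative f with hg
  rw [RealRooted, map_id]; refine Splits.of_splits_map (algebraMap ℝ ℂ) ?_ ?_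
  · exact IsAlgClosed.splits _
  intro z hz
  suffices him : z.im = 0 by
    exact ⟨z.re, Complex.ext (by simp) (by simp [him])⟩
  by_contra him
  have hz0 : eval z (g.map (algebraMap ℝ ℂ)) = 0 := by
    have := (mem_roots'.1 hz).2
    simpa [IsRoot] using this
  have hf' : f.Splits := by simpa [RealRooted] using hf
  have hfr := hf'.eq_prod_roots
  set s : Multiset ℂ := f.roots.map (algebraMap ℝ ℂ) with hs
  have hF : f.map (algebraMap ℝ ℂ) =
      C ((algebraMap ℝ ℂ) f.leadingCoeff) * (s.map fun r => X - C r).prod := by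
    conv_lhs => rw [hfr]
    rw [Polynomial.map_mul, Polynomial.map_C, hs, Multiset.map_map]
    congr 1
    rw [Polynomial.map_multiset_prod, Multiset.map_map]
    congr 1
    ext r
    simp
  have hsreal : ∀ r ∈ s, r.im = 0 := by
    intro r hr
    obtain ⟨x, _, rfl⟩ := Multiset.mem_map.1 hr
    simp
  have hgz : eval z (f.map (algebraMap ℝ ℂ)) =
      (c : ℂ) * eval z (derivative (f.map (algebraMap ℝ ℂ))) := by
    have hmap : g.map (algebraMap ℝ ℂ) = f.map (algebraMap ℝ ℂ)
        - C (c:ℂ) * derivative (f.map (algebraMap ℝ ℂ)) := by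
      rw [hg, Polynomial.smul_eq_C_mul, Polynomial.map_sub, Polynomial.map_mul,
        Polynomial.map_C, derivative_map]
      norm_num
    rw [hmap] at hz0
    simp only [eval_sub, eval_mul, eval_C, sub_eq_zero] at hz0
    exact hz0
  have hFz : eval z (f.map (algebraMap ℝ ℂ)) ≠ 0 := by
    intro h0
    have : z ∈ (f.map (algebraMap ℝ ℂ)).roots := by
      rw [mem_roots']
      exact ⟨by simpa using hf0, h0⟩
    rw [hf'.roots_map _] at this
    obtain ⟨x, _, rfl⟩ := Multiset.mem_map.1 this
    simp at him
  have hzr : ∀ r ∈ s, z - r ≠ 0 := by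
    intro r hr h0
    apply hFz
    rw [hF, eval_mul]
    apply mul_eq_zero_of_right
    rw [eval_multiset_prod, Multiset.map_map, Multiset.prod_eq_zero_iff]
    exact Multiset.mem_map.2 ⟨r, hr, by simp [sub_eq_zero.1 h0]⟩
  have ha : ((algebraMap ℝ ℂ) f.leadingCoeff) ≠ 0 := by
    simp [leadingCoeff_ne_zero.2 hf0]
  have hPz : eval z ((s.map fun r => X - C r).prod) ≠ 0 := by
    intro h0
    apply hFz
    rw [hF]; simp [h0]
  have key : (1 : ℂ) = (c : ℂ) * (s.map fun r => (z - r)⁻¹).sum := by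
    rw [hF, derivative_mul, derivative_C, zero_mul, zero_add, eval_mul, eval_C, eval_mul,
      eval_C, logderiv_prod s z hzr] at hgz
    have h1 : (algebraMap ℝ ℂ) f.leadingCoeff *
        (eval z ((s.map fun r => X - C r).prod) * (1:ℂ)) =
        (algebraMap ℝ ℂ) f.leadingCoeff *
        (eval z ((s.map fun r => X - C r).prod) *
          ((c : ℂ) * (s.map fun r => (z - r)⁻¹).sum)) := by
      linear_combination hgz
    exact mul_left_cancel₀ hPz (mul_left_cancel₀ ha h1)
  -- take imaginary parts
  have hsumim : ((s.map fun r => (z - r)⁻¹).sum).im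
      = (s.map fun r => -z.im / Complex.normSq (z - r)).sum := by
    rw [← Complex.coe_imAddGroupHom, map_multiset_sum, Multiset.map_map]
    congr 1
    apply Multiset.map_congr rfl
    intro r hr
    simp [Complex.coe_imAddGroupHom, Complex.inv_im, hsreal r hr]
  have him0 : (0:ℝ) = c * (s.map fun r => -z.im / Complex.normSq (z - r)).sum := by
    have := congrArg Complex.im key
    rwa [Complex.one_im, Complex.ofReal_mul', hsumim] at this
  have hsne : s ≠ 0 := by
    intro h0
    rw [h0] at key
    simp at key
  -- each term -z.im / normSq (z - r) has the same nonzero sign; the sum is 0: contradiction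
  have habs : (s.map fun r => (Complex.normSq (z - r))⁻¹).sum = 0 := by
    have h1 : (s.map fun r => -z.im / Complex.normSq (z - r)).sum
        = -z.im * (s.map fun r => (Complex.normSq (z - r))⁻¹).sum := by
      rw [← Multiset.sum_map_mul_left]
      congr 1
    rw [h1] at him0
    rcases mul_eq_zero.1 ((mul_eq_zero.1 him0.symm).resolve_left hc0.ne') with h | h
    · exact absurd (neg_eq_zero.1 h) him
    · exact h
  have hpos : (0:ℝ) < (s.map fun r => (Complex.normSq (z - r))⁻¹).sum := by
    obtain ⟨a, hamem⟩ := Multiset.exists_mem_of_ne_zero hsne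
    have h1 : ∀ x ∈ s.map fun r => (Complex.normSq (z - r))⁻¹, (0:ℝ) ≤ x := by
      intro x hx
      obtain ⟨r, _, rfl⟩ := Multiset.mem_map.1 hx
      exact inv_nonneg.2 (Complex.normSq_nonneg _)
    have h2 : (Complex.normSq (z - a))⁻¹ ≤ (s.map fun r => (Complex.normSq (z - r))⁻¹).sum :=
      Multiset.single_le_sum h1 _ (Multiset.mem_map.2 ⟨a, hamem, rfl⟩)
    have h3 : (0:ℝ) < (Complex.normSq (z - a))⁻¹ :=
      inv_pos.2 (Complex.normSq_pos.2 (hzr a hamem))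
    linarith
  linarith [habs, hpos]
end

section
/- Let r_1, …, r_m be independent random column vectors in ℂ^d, each taking finitely many values (say r_i takes value w_{i,j} ∈ ℂ^d with probability p_{i,j} > 0, ∑_j p_{i,j} = 1), and let A_i = E[r_i r_i*] = ∑_j p_{i,j} w_{i,j} w_{i,j}*. Then the expected characteristic polynomial satisfies ∑_{j_1,…,j_m} (∏_i p_{i,j_i}) det(xI − ∑_i w_{i,j_i} w_{i,j_i}*) = (∏_{i=1}^m (1 − ∂_{z_i})) det(xI + ∑_{i=1}^m z_i A_i) evaluated at z_1 = … = z_m = 0. -/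
open Polynomial Matrix

/-- The rank-one outer product `v v*`. -/
noncomputable def outer {d : ℕ} (v : Fin d → ℂ) : Matrix (Fin d) (Fin d) ℂ :=
  Matrix.vecMulVec v (star v)

/-- The multivariate polynomial `det(x I + ∑ i, z i • A i)`, in the variables
`none = x` and `some i = z i`. -/
noncomputable def detPoly {d m : ℕ} (A : Fin m → Matrix (Fin d) (Fin d) ℂ) :
    MvPolynomial (Option (Fin m)) ℂ :=
  ((MvPolynomial.X (none : Option (Fin m)) : MvPolynomial (Option (Fin m)) ℂ) •
      (1 : Matrix (Fin d) (Fin d) (MvPolynomial (Option (Fin m)) ℂ)) +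
    ∑ i : Fin m, (MvPolynomial.X (some i) : MvPolynomial (Option (Fin m)) ℂ) •
      (A i).map MvPolynomial.C).det

/-- The differential operator `∏ i (1 - ∂_{z i})`. -/
noncomputable def mixedOp (m : ℕ) :
    Module.End ℂ (MvPolynomial (Option (Fin m)) ℂ) :=
  (List.ofFn (fun i : Fin m =>
    (1 : Module.End ℂ (MvPolynomial (Option (Fin m)) ℂ)) -
      (MvPolynomial.pderiv (some i)).toLinearMap)).prod

/-- The mixed characteristic polynomial
`μ[A₁,…,A_m](x) = ∏ i (1 - ∂_{z i}) det(xI + ∑ i z i A i) |_{z=0}`,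
obtained by substituting `x ↦ X` and `z i ↦ 0`. -/
noncomputable def mixedCharPoly {d m : ℕ}
    (A : Fin m → Matrix (Fin d) (Fin d) ℂ) : Polynomial ℂ :=
  MvPolynomial.aeval (fun o : Option (Fin m) =>
      match o with
      | none => (Polynomial.X : Polynomial ℂ)
      | some _ => (0 : Polynomial ℂ))
    (mixedOp m (detPoly A))

namespace MSS

open MvPolynomial

lemma pderiv_comm' {σ R : Type*} [CommSemiring R] [DecidableEq σ] (i j : σ)
    (P : MvPolynomial σ R) : pderiv i (pderiv j P) = pderiv j (pderiv i P) := by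
  induction P using MvPolynomial.induction_on' with
  | monomial s a =>
    simp only [pderiv_monomial]
    rcases eq_or_ne i j with rfl | hij
    · rfl
    · rw [tsub_right_comm, Finsupp.tsub_apply, Finsupp.tsub_apply,
        Finsupp.single_apply, Finsupp.single_apply, if_neg hij, if_neg (Ne.symm hij)]
      simp only [Nat.sub_zero]
      ring_nf
  | add p q hp hq => simp [hp, hq]

variable {m : ℕ}

noncomputable def ED (m : ℕ) (k : Fin m) : Module.End ℂ (MvPolynomial (Option (Fin m)) ℂ) :=
  1 - (pderiv (some k)).toLinearMap

noncomputable def opL (m : ℕ) (l : List (Fin m)) :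
    Module.End ℂ (MvPolynomial (Option (Fin m)) ℂ) :=
  (l.map (ED m)).prod

lemma mixedOp_eq_opL : mixedOp m = opL m (List.finRange m) := by
  unfold mixedOp opL ED
  rw [List.ofFn_eq_map]

lemma commute_ED (k l : Fin m) : Commute (ED m k) (ED m l) := by
  have h : ((pderiv (some k)).toLinearMap : Module.End ℂ (MvPolynomial (Option (Fin m)) ℂ)) *
      (pderiv (some l)).toLinearMap
      = (pderiv (some l)).toLinearMap * (pderiv (some k)).toLinearMap := by
    apply LinearMap.ext
    intro P
    exact pderiv_comm' _ _ P
  show _ * _ = _ * _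
  unfold ED
  simp only [mul_sub, sub_mul, one_mul, mul_one, h]
  abel

lemma ED_apply (k : Fin m) (P : MvPolynomial (Option (Fin m)) ℂ) :
    ED m k P = P - pderiv (some k) P := rfl

lemma dvd_ED {i k : Fin m} (h : k ≠ i) {n : ℕ} {P : MvPolynomial (Option (Fin m)) ℂ}
    (hd : X (some i) ^ n ∣ P) : X (some i) ^ n ∣ ED m k P := by
  obtain ⟨r, rfl⟩ := hd
  refine ⟨r - pderiv (some k) r, ?_⟩
  rw [ED_apply, pderiv_mul, pderiv_pow,
    pderiv_X_of_ne (by simpa using fun e => h e.symm)]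
  ring

lemma dvd_opL {i : Fin m} {l : List (Fin m)} (h : i ∉ l) {n : ℕ}
    {P : MvPolynomial (Option (Fin m)) ℂ}
    (hd : X (some i) ^ n ∣ P) : X (some i) ^ n ∣ opL m l P := by
  induction l generalizing P with
  | nil => simpa [opL] using hd
  | cons k t ih =>
    have hki : k ≠ i := fun e => h (e ▸ (List.mem_cons_self : k ∈ k :: t))
    have hit : i ∉ t := fun e => h (List.mem_cons_of_mem _ e)
    have e1 : opL m (k :: t) P = ED m k (opL m t P) := by
      simp [opL, List.prod_cons, Module.End.mul_apply]
    rw [e1]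
    exact dvd_ED hki (ih hit hd)

lemma dvd_ED_self {i : Fin m} {P : MvPolynomial (Option (Fin m)) ℂ}
    (hd : X (some i) ^ 2 ∣ P) : X (some i) ∣ ED m i P := by
  obtain ⟨r, rfl⟩ := hd
  refine ⟨X (some i) * r - 2 * r - X (some i) * pderiv (some i) r, ?_⟩
  rw [ED_apply, pderiv_mul, pderiv_pow, pderiv_X_self]
  push_cast
  ring

noncomputable def σm (m : ℕ) : Option (Fin m) → Polynomial ℂ := fun o => match o with
  | none => Polynomial.X
  | some _ => 0

lemma list_pairwise_total {α : Type*} {R : α → α → Prop} (h : ∀ a b, R a b) :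
    ∀ l : List α, l.Pairwise R := by
  intro l
  induction l with
  | nil => simp
  | cons a t ih => exact List.Pairwise.cons (fun b _ => h a b) ih

lemma mixedOp_eq_cons_erase (i : Fin m) (P : MvPolynomial (Option (Fin m)) ℂ) :
    mixedOp m P = ED m i (opL m ((List.finRange m).erase i) P) := by
  have hperm : List.Perm ((i :: (List.finRange m).erase i).map (ED m))
      ((List.finRange m).map (ED m)) :=
    ((List.perm_cons_erase (List.mem_finRange i)).symm).map _
  have hpair : ((i :: (List.finRange m).erase i).map (ED m)).Pairwise Commute :=
    List.pairwise_map.mpr (list_pairwise_total (fun a b => commute_ED a b) _)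
  rw [mixedOp_eq_opL]
  unfold opL
  rw [← hperm.prod_eq' hpair, List.map_cons, List.prod_cons, Module.End.mul_apply]

lemma psi_zero (i : Fin m) {P : MvPolynomial (Option (Fin m)) ℂ}
    (hd : X (some i) ^ 2 ∣ P) : aeval (σm m) (mixedOp m P) = 0 := by
  have hni : i ∉ (List.finRange m).erase i := (List.nodup_finRange m).not_mem_erase
  have h2 : X (some i) ^ 2 ∣ opL m ((List.finRange m).erase i) P := dvd_opL hni hd
  obtain ⟨r, hr⟩ := dvd_ED_self h2
  rw [mixedOp_eq_cons_erase i, hr, _root_.map_mul, MvPolynomial.aeval_X]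
  show σm m (some i) * _ = 0
  simp [σm]

lemma aeval_zero_of_dvd (i : Fin m) {Q : MvPolynomial (Option (Fin m)) ℂ}
    (h : X (some i) ∣ Q) : aeval (σm m) Q = 0 := by
  obtain ⟨r, rfl⟩ := h
  rw [_root_.map_mul, MvPolynomial.aeval_X]
  show σm m (some i) * _ = 0
  simp [σm]

lemma pderiv_prodX (k : Fin m) (S : Finset (Fin m)) :
    pderiv (some k) ((∏ i ∈ S, X (some i) : MvPolynomial (Option (Fin m)) ℂ)) =
      if k ∈ S then ∏ i ∈ S.erase k, X (some i) else 0 := by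
  induction S using Finset.induction_on with
  | empty => simp [pderiv_one]
  | @insert a s ha ih =>
    rw [Finset.prod_insert ha, pderiv_mul, ih]
    rcases eq_or_ne k a with rfl | hka
    · rw [pderiv_X_self, if_neg ha, if_pos (Finset.mem_insert_self k s),
        Finset.erase_insert ha]
      ring
    · rw [pderiv_X_of_ne (by simpa using fun e => hka e.symm)]
      by_cases hks : k ∈ s
      · rw [if_pos hks, if_pos (Finset.mem_insert_of_mem hks),
          Finset.erase_insert_of_ne (Ne.symm (by simpa using fun e => hka e)),
          Finset.prod_insert (by simp [ha])]
        ring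
      · rw [if_neg hks, if_neg (by simp [hka, hks])]
        ring

lemma psi_sf_list (a : ℕ) :
    ∀ (l : List (Fin m)), l.Nodup → ∀ (S : Finset (Fin m)), (∀ i ∈ S, i ∈ l) →
      aeval (σm m) (opL m l ((X none ^ a : MvPolynomial (Option (Fin m)) ℂ) *
          ∏ i ∈ S, X (some i))) =
        (-1 : Polynomial ℂ) ^ S.card * Polynomial.X ^ a := by
  intro l
  induction l using List.reverseRecOn with
  | nil =>
    intro _ S hS
    have hSe : S = ∅ := Finset.eq_empty_of_forall_notMem (fun i hi => by simpa using hS i hi)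
    subst hSe
    simp only [Finset.prod_empty, mul_one, Finset.card_empty, pow_zero, one_mul]
    show aeval (σm m) ((X none : MvPolynomial (Option (Fin m)) ℂ) ^ a) = _
    rw [map_pow, MvPolynomial.aeval_X]
    rfl
  | append_singleton t k ih =>
    intro hnd S hS
    have hkt : k ∉ t := by
      intro hmem
      have := List.disjoint_of_nodup_append hnd
      exact this hmem (List.mem_singleton_self k)
    have e1 : ∀ P, opL m (t ++ [k]) P = opL m t (ED m k P) := by
      intro P
      unfold opL
      rw [List.map_append, List.prod_append]
      simp [Module.End.mul_apply]
    rw [e1, ED_apply, pderiv_mul, pderiv_prodX]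
    have hXa : pderiv (some k) ((X none ^ a : MvPolynomial (Option (Fin m)) ℂ)) = 0 := by
      rw [pderiv_pow, pderiv_X_of_ne (by simp)]
      ring
    rw [hXa, zero_mul, zero_add]
    by_cases hkS : k ∈ S
    · rw [if_pos hkS, map_sub, map_sub]
      have hz : aeval (σm m) (opL m t ((X none ^ a : MvPolynomial (Option (Fin m)) ℂ) *
          ∏ i ∈ S, X (some i))) = 0 := by
        refine aeval_zero_of_dvd k ?_
        have := dvd_opL hkt (n := 1) (l := t)
          (P := (X none ^ a : MvPolynomial (Option (Fin m)) ℂ) * ∏ i ∈ S, X (some i))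
        rw [pow_one] at this
        exact this (Dvd.dvd.mul_left (Finset.dvd_prod_of_mem _ hkS) _)
      have hih := ih (List.Nodup.of_append_left hnd) (S.erase k) (fun i hi => by
        have := hS i (Finset.mem_of_mem_erase hi)
        rcases List.mem_append.mp this with h | h
        · exact h
        · exact absurd (List.mem_singleton.mp h) (Finset.ne_of_mem_erase hi))
      rw [hz, hih, ← Finset.card_erase_add_one hkS, pow_succ]
      ring
    · rw [if_neg hkS, mul_zero, sub_zero]
      exact ih (List.Nodup.of_append_left hnd) S (fun i hi => by
        rcases List.mem_append.mp (hS i hi) with h | h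
        · exact h
        · exact absurd (List.mem_singleton.mp h) (fun e => hkS (e ▸ hi)))

lemma psi_sf (a : ℕ) (S : Finset (Fin m)) :
    aeval (σm m) (mixedOp m ((X none ^ a : MvPolynomial (Option (Fin m)) ℂ) *
        ∏ i ∈ S, X (some i))) =
      (-1 : Polynomial ℂ) ^ S.card * Polynomial.X ^ a := by
  rw [mixedOp_eq_opL]
  exact psi_sf_list a _ (List.nodup_finRange m) S (fun i _ => List.mem_finRange i)

lemma psi_sf' {ι : Type*} [Fintype ι] (lab : ι → Fin m) (hinj : Function.Injective lab)
    (a : ℕ) :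
    aeval (σm m) (mixedOp m ((X none ^ a : MvPolynomial (Option (Fin m)) ℂ) *
        ∏ k : ι, X (some (lab k)))) =
      (-1 : Polynomial ℂ) ^ (Fintype.card ι) * Polynomial.X ^ a := by
  have h1 : (∏ i ∈ Finset.univ.image lab, (X (some i) : MvPolynomial (Option (Fin m)) ℂ)) =
      ∏ k : ι, X (some (lab k)) := by
    rw [Finset.prod_image]
    intro x _ y _ h
    exact hinj h
  rw [← h1, psi_sf, Finset.card_image_of_injective _ hinj]
  rfl



open MvPolynomial

section MainAux

variable {d m : ℕ} {N : Fin m → ℕ}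

variable (w : (i : Fin m) → Fin (N i) → (Fin d → ℂ)) (p : (i : Fin m) → Fin (N i) → ℝ)

def vrow (g : Fin d → Option ((i : Fin m) × Fin (N i))) : Fin d → Fin d → ℂ := fun k =>
  match g k with
  | none => Pi.single k 1
  | some t => star (w t.1 t.2)

def cg (g : Fin d → Option ((i : Fin m) × Fin (N i))) (k : Fin d) : ℂ :=
  match g k with
  | none => 1
  | some t => -((p t.1 t.2 : ℂ) * w t.1 t.2 k)

def pv (g : Fin d → Option ((i : Fin m) × Fin (N i))) (k : Fin d) : ℂ :=
  match g k with | none => 1 | some t => (p t.1 t.2 : ℂ)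

def c2 (g : Fin d → Option ((i : Fin m) × Fin (N i))) (k : Fin d) : ℂ :=
  match g k with | none => 1 | some t => (p t.1 t.2 : ℂ) * w t.1 t.2 k

def c3 (g : Fin d → Option ((i : Fin m) × Fin (N i))) (k : Fin d) : ℂ :=
  match g k with | none => 1 | some t => -(w t.1 t.2 k)

def Pinj (g : Fin d → Option ((i : Fin m) × Fin (N i))) : Prop :=
  ∀ k k' : Fin d, g k ≠ none → (g k).map Sigma.fst = (g k').map Sigma.fst → k = k'

def ag (g : Fin d → Option ((i : Fin m) × Fin (N i))) : ℕ :=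
  (Finset.univ.filter (fun k : Fin d => g k = none)).card

def iF (g : Fin d → Option ((i : Fin m) × Fin (N i))) (k : {k : Fin d // g k ≠ none}) :
    Fin m :=
  ((g k.1).get (Option.ne_none_iff_isSome.mp k.2)).1

def jF (g : Fin d → Option ((i : Fin m) × Fin (N i))) (k : {k : Fin d // g k ≠ none}) :
    Fin (N (iF g k)) :=
  ((g k.1).get (Option.ne_none_iff_isSome.mp k.2)).2

lemma g_eq (g : Fin d → Option ((i : Fin m) × Fin (N i))) (k : {k : Fin d // g k ≠ none}) :
    g k.1 = some ⟨iF g k, jF g k⟩ := by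
  rw [← Option.some_get (Option.ne_none_iff_isSome.mp k.2)]
  rfl

lemma iF_inj {g : Fin d → Option ((i : Fin m) × Fin (N i))} (hg : Pinj g) :
    Function.Injective (iF g) := by
  intro k k' h
  apply Subtype.ext
  apply hg _ _ k.2
  rw [g_eq g k, g_eq g k']
  simpa using h

lemma prod_option_subtype {M : Type*} [CommMonoid M] {α : Type*} [DecidableEq α]
    (g : Fin d → Option α) (F : Fin d → Option α → M)
    (hF : ∀ k, g k = none → F k (g k) = 1) :
    ∏ k, F k (g k) = ∏ k : {k : Fin d // g k ≠ none}, F k.1 (g k.1) := by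
  classical
  rw [← Finset.prod_filter_mul_prod_filter_not Finset.univ (fun k => g k ≠ none)]
  have h2 : (∏ k ∈ Finset.univ.filter (fun k => ¬ g k ≠ none), F k (g k)) = 1 :=
    Finset.prod_eq_one (fun k hk => hF k (not_not.mp (Finset.mem_filter.mp hk).2))
  rw [h2, mul_one]
  exact Finset.prod_subtype _ (fun k => by simp [Finset.mem_filter]) _

lemma prod_ite_one_pow {M : Type*} [CommMonoid M] (P : Fin d → Prop) [DecidablePred P]
    (x : M) :
    (∏ k, if P k then x else 1) = x ^ (Finset.univ.filter P).card := by
  rw [← Finset.prod_filter_mul_prod_filter_not Finset.univ P,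
    Finset.prod_congr rfl (fun k hk => if_pos (Finset.mem_filter.mp hk).2),
    Finset.prod_congr rfl (fun k hk => if_neg (Finset.mem_filter.mp hk).2),
    Finset.prod_const, Finset.prod_const, one_pow, mul_one]


noncomputable def Grow (k : Fin d) (t : Option ((i : Fin m) × Fin (N i))) :
    Fin d → MvPolynomial (Option (Fin m)) ℂ :=
  match t with
  | none => fun l => MvPolynomial.X none * MvPolynomial.C (Pi.single k 1 l)
  | some t => fun l => (MvPolynomial.X (some t.1) *
      MvPolynomial.C ((p t.1 t.2 : ℂ) * w t.1 t.2 k)) * MvPolynomial.C (star (w t.1 t.2 l))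

noncomputable def scR (g : Fin d → Option ((i : Fin m) × Fin (N i))) (k : Fin d) :
    MvPolynomial (Option (Fin m)) ℂ :=
  match g k with
  | none => MvPolynomial.X none
  | some t => MvPolynomial.X (some t.1) * MvPolynomial.C ((p t.1 t.2 : ℂ) * w t.1 t.2 k)

noncomputable def zp (g : Fin d → Option ((i : Fin m) × Fin (N i))) (k : Fin d) :
    MvPolynomial (Option (Fin m)) ℂ :=
  match g k with
  | none => 1
  | some t => MvPolynomial.X (some t.1)

lemma hrows :
    ((MvPolynomial.X (none : Option (Fin m)) : MvPolynomial (Option (Fin m)) ℂ) •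
      (1 : Matrix (Fin d) (Fin d) (MvPolynomial (Option (Fin m)) ℂ)) +
    ∑ i : Fin m, (MvPolynomial.X (some i) : MvPolynomial (Option (Fin m)) ℂ) •
      ((∑ j, p i j • outer (w i j)).map MvPolynomial.C))
    = Matrix.of (fun k => ∑ t : Option ((i : Fin m) × Fin (N i)), Grow w p k t) := by
  refine Matrix.ext fun k l => ?_
  rw [Matrix.of_apply, Finset.sum_apply, univ_option, Finset.sum_insertNone,
    ← Finset.univ_sigma_univ, Finset.sum_sigma]
  simp only [Matrix.add_apply, Matrix.smul_apply, Matrix.sum_apply, Matrix.one_apply,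
    Matrix.map_apply, Grow, outer, Matrix.vecMulVec_apply, Pi.smul_apply,
    Complex.real_smul, smul_eq_mul, map_sum, _root_.map_mul, Pi.star_apply]
  congr 1
  · rw [Pi.single_apply]
    rcases eq_or_ne k l with rfl | hkl
    · simp
    · rw [if_neg hkl, if_neg (Ne.symm hkl)]
      simp
  · refine Finset.sum_congr rfl (fun i _ => ?_)
    rw [Finset.mul_sum]
    refine Finset.sum_congr rfl (fun j _ => ?_)
    ring


open scoped Classical in
lemma partA :
    mixedCharPoly (fun i => ∑ j, p i j • outer (w i j)) =
      ∑ g : Fin d → Option ((i : Fin m) × Fin (N i)),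
        (if Pinj g then (∏ k, cg w p g k) * (Matrix.of (vrow w g)).det else 0) •
          (Polynomial.X : Polynomial ℂ) ^ ag g := by
  have hdet : detPoly (fun i => ∑ j, p i j • outer (w i j)) =
      ∑ g : Fin d → Option ((i : Fin m) × Fin (N i)),
        ((∏ k, c2 w p g k) * (Matrix.of (vrow w g)).det) •
          ((X none ^ ag g : MvPolynomial (Option (Fin m)) ℂ) * ∏ k, zp g k) := by
    unfold detPoly
    rw [hrows w p]
    have e0 : (Matrix.of (fun k => ∑ t : Option ((i : Fin m) × Fin (N i)), Grow w p k t)).det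
        = (Matrix.detRowAlternating (R := MvPolynomial (Option (Fin m)) ℂ)
            (n := Fin d)).toMultilinearMap
            (fun k => ∑ t : Option ((i : Fin m) × Fin (N i)), Grow w p k t) := rfl
    rw [e0, MultilinearMap.map_sum]
    refine Finset.sum_congr rfl (fun g _ => ?_)
    have e1 : (fun k => Grow w p k (g k)) =
        fun k => scR w p g k • (fun l => MvPolynomial.C (vrow w g k l)) := by
      funext k
      rcases hgk : g k with _ | t
      · funext l
        simp [Grow, scR, vrow, hgk, smul_eq_mul]
      · funext l
        simp [Grow, scR, vrow, hgk, smul_eq_mul, mul_assoc]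
    rw [e1, MultilinearMap.map_smul_univ]
    have e2 : (Matrix.detRowAlternating (R := MvPolynomial (Option (Fin m)) ℂ)
          (n := Fin d)).toMultilinearMap
          (fun k => fun l => MvPolynomial.C (vrow w g k l))
        = MvPolynomial.C ((Matrix.of (vrow w g)).det) :=
      (RingHom.map_det (MvPolynomial.C : ℂ →+* MvPolynomial (Option (Fin m)) ℂ)
        (Matrix.of (vrow w g))).symm
    rw [e2]
    have e3 : (∏ k, scR w p g k) =
        ((X none ^ ag g : MvPolynomial (Option (Fin m)) ℂ) * ∏ k, zp g k) *
          MvPolynomial.C (∏ k, c2 w p g k) := by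
      have hpt : ∀ k, scR w p g k =
          (if g k = none then (X none : MvPolynomial (Option (Fin m)) ℂ) else 1) *
            (zp g k * MvPolynomial.C (c2 w p g k)) := by
        intro k
        rcases hgk : g k with _ | t <;> simp [scR, zp, c2, hgk]
      rw [Finset.prod_congr rfl (fun k _ => hpt k), Finset.prod_mul_distrib,
        Finset.prod_mul_distrib, prod_ite_one_pow, ← map_prod]
      rw [mul_assoc]
      rfl
    rw [e3, smul_eq_mul, MvPolynomial.smul_eq_C_mul, _root_.map_mul]
    ring
  have hpsi : mixedCharPoly (fun i => ∑ j, p i j • outer (w i j)) =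
      ∑ g : Fin d → Option ((i : Fin m) × Fin (N i)),
        ((∏ k, c2 w p g k) * (Matrix.of (vrow w g)).det) •
          aeval (σm m) (mixedOp m
            ((X none ^ ag g : MvPolynomial (Option (Fin m)) ℂ) * ∏ k, zp g k)) := by
    show aeval (σm m) (mixedOp m (detPoly _)) = _
    rw [hdet, _root_.map_sum, _root_.map_sum]
    exact Finset.sum_congr rfl fun g _ => by rw [_root_.map_smul, _root_.map_smul]
  rw [hpsi]
  refine Finset.sum_congr rfl fun g _ => ?_
  by_cases hg : Pinj g
  · rw [if_pos hg]
    have hzp : (∏ k, zp g k) =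
        ∏ k : {k : Fin d // g k ≠ none}, (X (some (iF g k)) : MvPolynomial (Option (Fin m)) ℂ) := by
      have h2 := prod_option_subtype (d := d) g
        (fun (k : Fin d) (t : Option ((i : Fin m) × Fin (N i))) =>
          match t with
          | none => (1 : MvPolynomial (Option (Fin m)) ℂ)
          | some tt => X (some tt.1))
        (fun k hk => by rw [hk])
      have h0 : (∏ k, zp g k) = ∏ k, (fun (k : Fin d) (t : Option ((i : Fin m) × Fin (N i))) =>
          match t with
          | none => (1 : MvPolynomial (Option (Fin m)) ℂ)
          | some tt => X (some tt.1)) k (g k) := rfl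
      rw [h0, h2]
      refine Finset.prod_congr rfl fun k _ => ?_
      rw [g_eq g k]
    rw [hzp, psi_sf' (iF g) (iF_inj hg) (ag g)]
    have hcg : (∏ k, cg w p g k) =
        (∏ k, (if g k = none then (1:ℂ) else -1)) * ∏ k, c2 w p g k := by
      rw [← Finset.prod_mul_distrib]
      refine Finset.prod_congr rfl fun k _ => ?_
      rcases hgk : g k with _ | t <;> simp [cg, c2, hgk]
    have hsgn : (∏ k, (if g k = none then (1:ℂ) else -1)) =
        (-1 : ℂ) ^ (Fintype.card {k : Fin d // g k ≠ none}) := by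
      have h1 : ∀ k, (if g k = none then (1:ℂ) else -1) =
          (if ¬ g k = none then (-1:ℂ) else 1) := fun k => by
        by_cases h : g k = none <;> simp [h]
      rw [Finset.prod_congr rfl (fun k _ => h1 k), prod_ite_one_pow, Fintype.card_subtype]
    have hC : ((-1 : Polynomial ℂ) ^ (Fintype.card {k : Fin d // g k ≠ none}) *
        Polynomial.X ^ ag g) =
        ((-1:ℂ) ^ (Fintype.card {k : Fin d // g k ≠ none})) •
          (Polynomial.X ^ ag g : Polynomial ℂ) := by
      rw [Polynomial.smul_eq_C_mul, map_pow, map_neg, Polynomial.C_1]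
    rw [hC, smul_smul, hcg, hsgn]
    ring_nf
  · rw [if_neg hg, zero_smul]
    have hg' : ∃ k k', g k ≠ none ∧ (g k).map Sigma.fst = (g k').map Sigma.fst ∧ k ≠ k' := by
      unfold Pinj at hg
      push_neg at hg
      exact hg
    obtain ⟨k, k', hk, hmap, hkk'⟩ := hg'
    obtain ⟨t, ht⟩ := Option.ne_none_iff_exists'.mp hk
    have hk'ex : ∃ t', g k' = some t' ∧ t'.1 = t.1 := by
      rcases hgk' : g k' with _ | t'
      · rw [ht, hgk'] at hmap
        simp at hmap
      · rw [ht, hgk'] at hmap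
        simp only [Option.map_some, Option.some.injEq] at hmap
        exact ⟨t', rfl, hmap.symm⟩
    obtain ⟨t', ht', hfst⟩ := hk'ex
    have hdvd : (X (some t.1) : MvPolynomial (Option (Fin m)) ℂ) ^ 2 ∣
        (X none ^ ag g : MvPolynomial (Option (Fin m)) ℂ) * ∏ k, zp g k := by
      have h1 : (∏ kk, zp (N := N) g kk) = zp g k * (zp g k' *
          ∏ kk ∈ (Finset.univ.erase k).erase k', zp g kk) := by
        rw [← Finset.mul_prod_erase _ _ (Finset.mem_univ k),
          ← Finset.mul_prod_erase _ _
            (Finset.mem_erase.mpr ⟨Ne.symm hkk', Finset.mem_univ k'⟩)]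
      have h2 : zp (N := N) g k = X (some t.1) := by simp [zp, ht]
      have h3 : zp (N := N) g k' = X (some t.1) := by
        rw [show zp (N := N) g k' = X (some t'.1) from by simp [zp, ht'], hfst]
      refine ⟨(X none ^ ag g) * ∏ kk ∈ (Finset.univ.erase k).erase k', zp g kk, ?_⟩
      rw [h1, h2, h3]
      ring
    rw [psi_zero t.1 hdvd, smul_zero]

noncomputable def Hrow (jv : (i : Fin m) → Fin (N i)) (k : Fin d) (t : Option (Fin m)) :
    Fin d → Polynomial ℂ :=
  match t with
  | none => fun l => Polynomial.X * Polynomial.C (Pi.single k 1 l)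
  | some i => fun l => Polynomial.C (-(w i (jv i) k)) * Polynomial.C (star (w i (jv i) l))

def θf (jv : (i : Fin m) → Fin (N i)) (f : Fin d → Option (Fin m)) :
    Fin d → Option ((i : Fin m) × Fin (N i)) :=
  fun k => (f k).map (fun i => ⟨i, jv i⟩)

noncomputable def scB (jv : (i : Fin m) → Fin (N i)) (f : Fin d → Option (Fin m)) (k : Fin d) :
    Polynomial ℂ :=
  match f k with
  | none => Polynomial.X
  | some i => Polynomial.C (-(w i (jv i) k))

def cmpt (jv : (i : Fin m) → Fin (N i)) (g : Fin d → Option ((i : Fin m) × Fin (N i))) : Prop :=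
  ∀ (k : Fin d) (t : (i : Fin m) × Fin (N i)), g k = some t → jv t.1 = t.2

noncomputable def Uterm (g : Fin d → Option ((i : Fin m) × Fin (N i))) : Polynomial ℂ :=
  ((∏ k, c3 w g k) * (Matrix.of (vrow w g)).det) • (Polynomial.X : Polynomial ℂ) ^ ag g

lemma theta_fst (jv : (i : Fin m) → Fin (N i)) (f : Fin d → Option (Fin m)) (k : Fin d) :
    ((θf jv f) k).map Sigma.fst = f k := by
  rcases hfk : f k with _ | i <;> simp [θf, hfk]

lemma theta_inj (jv : (i : Fin m) → Fin (N i)) : Function.Injective (θf (d := d) jv) := by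
  intro f f' h
  funext k
  rw [← theta_fst jv f k, ← theta_fst jv f' k, h]

lemma hchar (jv : (i : Fin m) → Fin (N i)) :
    (∑ i, outer (w i (jv i))).charpoly =
      ∑ f : Fin d → Option (Fin m),
        ((∏ k, c3 w (θf jv f) k) * (Matrix.of (vrow w (θf jv f))).det) •
          (Polynomial.X : Polynomial ℂ) ^ ag (θf jv f) := by
  have hrowsB : charmatrix (∑ i, outer (w i (jv i))) =
      Matrix.of (fun k => ∑ t : Option (Fin m), Hrow w jv k t) := by
    refine Matrix.ext fun k l => ?_
    rw [Matrix.of_apply, Finset.sum_apply, univ_option, Finset.sum_insertNone,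
      charmatrix_apply, Matrix.diagonal_apply]
    simp only [Hrow, Matrix.sum_apply, outer, Matrix.vecMulVec_apply, Pi.star_apply,
      map_sum, map_neg, _root_.map_mul]
    rw [sub_eq_add_neg]
    congr 1
    · rw [Pi.single_apply]
      rcases eq_or_ne k l with rfl | hkl
      · simp
      · rw [if_neg hkl, if_neg (Ne.symm hkl)]
        simp
    · rw [← Finset.sum_neg_distrib]
      exact Finset.sum_congr rfl fun i _ => by ring
  show (charmatrix (∑ i, outer (w i (jv i)))).det = _
  rw [hrowsB]
  have e0 : (Matrix.of (fun k => ∑ t : Option (Fin m), Hrow w jv k t)).det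
      = (Matrix.detRowAlternating (R := Polynomial ℂ) (n := Fin d)).toMultilinearMap
          (fun k => ∑ t : Option (Fin m), Hrow w jv k t) := rfl
  rw [e0, MultilinearMap.map_sum]
  refine Finset.sum_congr rfl (fun f _ => ?_)
  have e1 : (fun k => Hrow w jv k (f k)) =
      fun k => scB w jv f k • (fun l => Polynomial.C (vrow w (θf jv f) k l)) := by
    funext k
    rcases hfk : f k with _ | i
    · funext l
      simp [Hrow, scB, vrow, θf, hfk, smul_eq_mul]
    · funext l
      simp [Hrow, scB, vrow, θf, hfk, smul_eq_mul]
  rw [e1, MultilinearMap.map_smul_univ]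
  have e2 : (Matrix.detRowAlternating (R := Polynomial ℂ)
        (n := Fin d)).toMultilinearMap
        (fun k => fun l => Polynomial.C (vrow w (θf jv f) k l))
      = Polynomial.C ((Matrix.of (vrow w (θf jv f))).det) :=
    (RingHom.map_det (Polynomial.C : ℂ →+* Polynomial ℂ)
      (Matrix.of (vrow w (θf jv f)))).symm
  rw [e2]
  have e3 : (∏ k, scB w jv f k) =
      (Polynomial.X : Polynomial ℂ) ^ ag (θf jv f) *
        Polynomial.C (∏ k, c3 w (θf jv f) k) := by
    have hpt : ∀ k, scB w jv f k =
        (if f k = none then (Polynomial.X : Polynomial ℂ) else 1) *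
          Polynomial.C (c3 w (θf jv f) k) := by
      intro k
      rcases hfk : f k with _ | i <;> simp [scB, c3, θf, hfk]
    have hfilter : Finset.univ.filter (fun k => f k = none) =
        Finset.univ.filter (fun k => θf jv f k = none) := by
      ext k
      simp [θf, Option.map_eq_none_iff]
    rw [Finset.prod_congr rfl (fun k _ => hpt k), Finset.prod_mul_distrib,
      prod_ite_one_pow, ← map_prod]
    unfold ag
    rw [hfilter]
  rw [e3, smul_eq_mul, Polynomial.smul_eq_C_mul, _root_.map_mul]
  ring

open scoped Classical in
lemma himage (jv : (i : Fin m) → Fin (N i)) :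
    Finset.univ.image (θf (d := d) jv) =
      Finset.univ.filter (fun g => cmpt jv g) := by
  ext g
  simp only [Finset.mem_image, Finset.mem_filter, Finset.mem_univ, true_and]
  constructor
  · rintro ⟨f, rfl⟩
    intro k t ht
    rcases hfk : f k with _ | i
    · rw [show θf jv f k = none from by simp [θf, hfk]] at ht
      exact absurd ht (by simp)
    · rw [show θf jv f k = some ⟨i, jv i⟩ from by simp [θf, hfk]] at ht
      obtain rfl := Option.some.inj ht
      rfl
  · intro hc
    refine ⟨fun k => (g k).map Sigma.fst, ?_⟩
    funext k
    rcases hgk : g k with _ | t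
    · simp [θf, hgk]
    · have h1 : jv t.1 = t.2 := hc k t hgk
      simp only [θf, hgk, Option.map_some, Option.some.injEq]
      rw [h1, Sigma.eta]

open scoped Classical in
lemma mass (hp1 : ∀ i, ∑ j, p i j = 1) (g : Fin d → Option ((i : Fin m) × Fin (N i)))
    (hg : Pinj g) :
    (∑ jv : (i : Fin m) → Fin (N i),
      if cmpt jv g then ((∏ i, p i (jv i) : ℝ) : ℂ) else 0) = ∏ k, pv p g k := by
  classical
  set tset : (i : Fin m) → Finset (Fin (N i)) := fun i =>
    Finset.univ.filter (fun j₀ : Fin (N i) =>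
      ∀ (k : Fin d) (j₁ : Fin (N i)), g k = some ⟨i, j₁⟩ → j₀ = j₁) with htset
  have hmem : ∀ jv, cmpt jv g ↔ ∀ i, jv i ∈ tset i := by
    intro jv
    constructor
    · intro hc i
      rw [htset]
      simp only [Finset.mem_filter, Finset.mem_univ, true_and]
      intro k j₁ hk
      exact hc k ⟨i, j₁⟩ hk
    · intro h k t ht
      have h2 := h t.1
      rw [htset] at h2
      simp only [Finset.mem_filter, Finset.mem_univ, true_and] at h2
      exact h2 k t.2 (by rw [← Sigma.eta t] at ht; exact ht)
  have hcast : ∀ jv : (i : Fin m) → Fin (N i),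
      ((∏ i, p i (jv i) : ℝ) : ℂ) = ∏ i, ((p i (jv i) : ℝ) : ℂ) := by
    intro jv
    push_cast
    rfl
  have hsing : ∀ k : {k : Fin d // g k ≠ none}, tset (iF g k) = {jF g k} := by
    intro k
    ext j₀
    rw [htset]
    simp only [Finset.mem_filter, Finset.mem_univ, true_and, Finset.mem_singleton]
    constructor
    · intro h
      exact h k.1 (jF g k) (g_eq g k)
    · rintro rfl k' j₁ hk'
      have hkk : k' = k.1 := by
        apply hg k' k.1 (by rw [hk']; exact Option.some_ne_none _)
        rw [hk', g_eq g k]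
        simp
      rw [hkk, g_eq g k] at hk'
      have h2 : (⟨iF g k, jF g k⟩ : (i : Fin m) × Fin (N i)) = ⟨iF g k, j₁⟩ :=
        Option.some.inj hk'
      simpa using h2
  have hIc : ∀ i, i ∉ Finset.univ.image (iF g) → tset i = Finset.univ := by
    intro i hi
    ext j₀
    rw [htset]
    simp only [Finset.mem_filter, Finset.mem_univ, true_and, iff_true]
    intro k j₁ hk
    exact absurd (Finset.mem_image.mpr
      ⟨⟨k, by rw [hk]; exact Option.some_ne_none _⟩,
        Finset.mem_univ _, by simp [iF, hk]⟩) hi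
  calc (∑ jv : (i : Fin m) → Fin (N i),
      if cmpt jv g then ((∏ i, p i (jv i) : ℝ) : ℂ) else 0)
      = ∑ jv ∈ Finset.univ.filter (fun jv => cmpt jv g),
          ∏ i, ((p i (jv i) : ℝ) : ℂ) := by
        rw [← Finset.sum_filter]
        exact Finset.sum_congr rfl fun jv _ => hcast jv
    _ = ∑ jv ∈ Fintype.piFinset tset, ∏ i, ((p i (jv i) : ℝ) : ℂ) := by
        refine Finset.sum_congr ?_ fun _ _ => rfl
        ext jv
        simp only [Finset.mem_filter, Finset.mem_univ, true_and, Fintype.mem_piFinset]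
        exact hmem jv
    _ = ∏ i, ∑ j₀ ∈ tset i, ((p i j₀ : ℝ) : ℂ) :=
        (Finset.prod_univ_sum tset (fun i j₀ => ((p i j₀ : ℝ) : ℂ))).symm
    _ = ∏ k, pv p g k := by
        rw [← Finset.prod_mul_prod_compl (Finset.univ.image (iF g))
          (fun i => ∑ j₀ ∈ tset i, ((p i j₀ : ℝ) : ℂ))]
        have h2 : (∏ i ∈ (Finset.univ.image (iF g))ᶜ,
            ∑ j₀ ∈ tset i, ((p i j₀ : ℝ) : ℂ)) = 1 := by
          refine Finset.prod_eq_one fun i hi => ?_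
          rw [hIc i (Finset.mem_compl.mp hi), ← Complex.ofReal_sum, hp1 i,
            Complex.ofReal_one]
        rw [h2, mul_one,
          Finset.prod_image (fun k _ k' _ h => iF_inj hg h)]
        have h3 : ∀ k : {k : Fin d // g k ≠ none},
            (∑ j₀ ∈ tset (iF g k), ((p (iF g k) j₀ : ℝ) : ℂ)) =
              ((p (iF g k) (jF g k) : ℝ) : ℂ) := by
          intro k
          rw [hsing k, Finset.sum_singleton]
        rw [Finset.prod_congr rfl (fun k _ => h3 k)]
        have h5 := prod_option_subtype (d := d) g
          (fun (k : Fin d) (t : Option ((i : Fin m) × Fin (N i))) =>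
            match t with
            | none => (1 : ℂ)
            | some t => ((p t.1 t.2 : ℝ) : ℂ))
          (fun k hk => by rw [hk])
        have h0 : (∏ k, pv p g k) = ∏ k, (fun (k : Fin d)
            (t : Option ((i : Fin m) × Fin (N i))) =>
            match t with
            | none => (1 : ℂ)
            | some t => ((p t.1 t.2 : ℝ) : ℂ)) k (g k) := rfl
        rw [h0, h5]
        exact (Finset.prod_congr rfl fun k _ => by rw [g_eq g k]).symm

open scoped Classical in
lemma partB (hp1 : ∀ i, ∑ j, p i j = 1) :
    (∑ jv : (i : Fin m) → Fin (N i),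
        ((∏ i, p i (jv i) : ℝ) : ℂ) • (∑ i, outer (w i (jv i))).charpoly)
      = ∑ g : Fin d → Option ((i : Fin m) × Fin (N i)),
        (if Pinj g then (∏ k, cg w p g k) * (Matrix.of (vrow w g)).det else 0) •
          (Polynomial.X : Polynomial ℂ) ^ ag g := by
  have step1 : ∀ jv : (i : Fin m) → Fin (N i),
      (∑ i, outer (w i (jv i))).charpoly =
        ∑ g : Fin d → Option ((i : Fin m) × Fin (N i)),
          if cmpt jv g then Uterm w g else 0 := by
    intro jv
    rw [hchar w jv]
    have e2 : (∑ f : Fin d → Option (Fin m), Uterm w (θf jv f)) =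
        ∑ g ∈ Finset.univ.image (θf (d := d) jv), Uterm w g :=
      (Finset.sum_image (fun x _ y _ h => theta_inj jv h)).symm
    rw [show (∑ f : Fin d → Option (Fin m),
        ((∏ k, c3 w (θf jv f) k) * (Matrix.of (vrow w (θf jv f))).det) •
          (Polynomial.X : Polynomial ℂ) ^ ag (θf jv f)) =
        ∑ f : Fin d → Option (Fin m), Uterm w (θf jv f) from rfl]
    rw [e2, himage jv, Finset.sum_filter]
  calc (∑ jv : (i : Fin m) → Fin (N i),
        ((∏ i, p i (jv i) : ℝ) : ℂ) • (∑ i, outer (w i (jv i))).charpoly)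
      = ∑ jv : (i : Fin m) → Fin (N i), ∑ g : Fin d → Option ((i : Fin m) × Fin (N i)),
          (if cmpt jv g then ((∏ i, p i (jv i) : ℝ) : ℂ) • Uterm w g else 0) := by
        refine Finset.sum_congr rfl fun jv _ => ?_
        rw [step1 jv, Finset.smul_sum]
        exact Finset.sum_congr rfl fun g _ => by
          by_cases hc : cmpt jv g <;> simp [hc]
    _ = ∑ g : Fin d → Option ((i : Fin m) × Fin (N i)), ∑ jv : (i : Fin m) → Fin (N i),
          (if cmpt jv g then ((∏ i, p i (jv i) : ℝ) : ℂ) • Uterm w g else 0) :=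
        Finset.sum_comm
    _ = ∑ g : Fin d → Option ((i : Fin m) × Fin (N i)),
          (∑ jv : (i : Fin m) → Fin (N i),
            if cmpt jv g then ((∏ i, p i (jv i) : ℝ) : ℂ) else 0) • Uterm w g := by
        refine Finset.sum_congr rfl fun g _ => ?_
        rw [Finset.sum_smul]
        exact Finset.sum_congr rfl fun jv _ => by
          by_cases hc : cmpt jv g <;> simp [hc]
    _ = ∑ g : Fin d → Option ((i : Fin m) × Fin (N i)),
        (if Pinj g then (∏ k, cg w p g k) * (Matrix.of (vrow w g)).det else 0) •
          (Polynomial.X : Polynomial ℂ) ^ ag g := by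
        refine Finset.sum_congr rfl fun g _ => ?_
        by_cases hg : Pinj g
        · rw [mass p hp1 g hg, if_pos hg]
          unfold Uterm
          rw [smul_smul]
          have hcg : (∏ k, cg w p g k) = (∏ k, pv p g k) * ∏ k, c3 w g k := by
            rw [← Finset.prod_mul_distrib]
            refine Finset.prod_congr rfl fun k _ => ?_
            rcases hgk : g k with _ | t <;> simp [cg, pv, c3, hgk]
          rw [hcg]
          ring_nf
        · rw [if_neg hg, zero_smul]
          have hg' : ∃ k k', g k ≠ none ∧
              (g k).map Sigma.fst = (g k').map Sigma.fst ∧ k ≠ k' := by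
            unfold Pinj at hg
            push_neg at hg
            exact hg
          obtain ⟨k, k', hk, hmap, hkk'⟩ := hg'
          obtain ⟨t, ht⟩ := Option.ne_none_iff_exists'.mp hk
          have hk'ex : ∃ t', g k' = some t' ∧ t'.1 = t.1 := by
            rcases hgk' : g k' with _ | t'
            · rw [ht, hgk'] at hmap
              simp at hmap
            · rw [ht, hgk'] at hmap
              simp only [Option.map_some, Option.some.injEq] at hmap
              exact ⟨t', rfl, hmap.symm⟩
          obtain ⟨t', ht', hfst⟩ := hk'ex
          by_cases hex : ∃ jv : (i : Fin m) → Fin (N i), cmpt jv g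
          · obtain ⟨jv, hc⟩ := hex
            obtain ⟨i0, a0⟩ := t
            obtain ⟨i1, b0⟩ := t'
            dsimp at hfst
            subst hfst
            have ha : jv i1 = a0 := hc k ⟨i1, a0⟩ ht
            have hb : jv i1 = b0 := hc k' ⟨i1, b0⟩ ht'
            have hab : a0 = b0 := ha ▸ hb
            subst hab
            have hrow : vrow w g k = vrow w g k' := by
              have h1 : vrow w g k = star (w i1 a0) := by simp [vrow, ht]
              have h2 : vrow w g k' = star (w i1 a0) := by simp [vrow, ht']
              rw [h1, h2]
            have hdet0 : (Matrix.of (vrow w g)).det = 0 :=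
              Matrix.det_zero_of_row_eq hkk' hrow
            rw [show Uterm w g = 0 from by rw [Uterm, hdet0, mul_zero, zero_smul]]
            rw [smul_zero]
          · rw [Finset.sum_eq_zero (fun jv _ => if_neg (fun hc => hex ⟨jv, hc⟩)),
              zero_smul]

end MainAux


end MSS

/-- **Expected characteristic polynomials are mixed characteristic
polynomials.**  Let `r₁, …, r_m` be independent finitely supported random
vectors in `ℂ^d`, where `rᵢ` takes value `w i j` with probability
`p i j > 0`, and let `Aᵢ = E[rᵢ rᵢ*]`.  Then
`E χ[∑ᵢ rᵢ rᵢ*](x) = ∏ᵢ (1 - ∂_{zᵢ}) det(xI + ∑ᵢ zᵢ Aᵢ) |_{z=0}`. -/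
theorem expected_charpoly_eq_mixedCharPoly
    {d m : ℕ} (N : Fin m → ℕ) (hN : ∀ i, 0 < N i)
    (w : (i : Fin m) → Fin (N i) → (Fin d → ℂ))
    (p : (i : Fin m) → Fin (N i) → ℝ)
    (hp : ∀ i j, 0 < p i j) (hp1 : ∀ i, ∑ j, p i j = 1) :
    ∑ j : (i : Fin m) → Fin (N i),
        ((∏ i, p i (j i) : ℝ) : ℂ) • (∑ i, outer (w i (j i))).charpoly
      = mixedCharPoly (fun i => ∑ j, p i j • outer (w i j)) := by
  rw [MSS.partB w p hp1]
  exact (MSS.partA w p).symm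
end
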